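/- (Binary Helstrom bound, pure states, equal priors.) Let φ₀ and φ₁ be unit vectors in ℂⁿ and set ρᵢ = φᵢ φᵢ*. Then for every n×n complex matrix Π₀ with Π₀ and I − Π₀ positive semidefinite, the average error probability ½·Re Tr((I − Π₀) ρ₀) + ½·Re Tr(Π₀ ρ₁) is at least ½(1 − √(1 − |⟨φ₀, φ₁⟩|²)), and this value is attained by some such Π₀. -/

import Mathlib

open scoped ComplexOrder
open Matrix

lemma hel_inner_eq_dot' {n : ℕ} (f g : Fin n → ℂ) :
    (inner ℂ ((WithLp.equiv 2 (Fin n → ℂ)).symm f) ((WithLp.equiv 2 (Fin n → ℂ)).symm g) : ℂ)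
      = dotProduct (star f) g := by
  simp [PiLp.inner_apply, RCLike.inner_apply, dotProduct, mul_comm]

lemma hel_inner_eq_dot {n : ℕ} (x y : EuclideanSpace ℂ (Fin n)) :
    (inner ℂ x y : ℂ) = dotProduct (star (fun i => x i)) (fun i => y i) := by
  simp [PiLp.inner_apply, RCLike.inner_apply, dotProduct, mul_comm]

lemma hel_conj_mul_self (t : ℂ) : (starRingEnd ℂ t) * t = ((‖t‖^2 : ℝ) : ℂ) := by
  rw [mul_comm, Complex.mul_conj, Complex.normSq_eq_norm_sq]

lemma hel_dot_conj {n : ℕ} (x y : Fin n → ℂ) :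
    dotProduct (star x) y = starRingEnd ℂ (dotProduct (star y) x) := by
  simp [dotProduct, map_sum, mul_comm]

lemma hel_trace_eq {n : ℕ} (P : Matrix (Fin n) (Fin n) ℂ) (ψ φ : Fin n → ℂ) :
    (P * Matrix.vecMulVec ψ (fun j => star (φ j))).trace
      = dotProduct (star φ) (P.mulVec ψ) := by
  simp [Matrix.trace, Matrix.mul_apply, Matrix.vecMulVec, dotProduct, Matrix.mulVec,
    Finset.mul_sum]
  exact Finset.sum_congr rfl fun i _ => Finset.sum_congr rfl fun j _ => by ring

lemma hel_dot_vecMulVec {n : ℕ} (u x y : Fin n → ℂ) :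
    star x ⬝ᵥ (Matrix.vecMulVec u (star u) *ᵥ y) = (star x ⬝ᵥ u) * (star u ⬝ᵥ y) := by
  simp only [dotProduct, Matrix.mulVec, Matrix.vecMulVec_apply, Pi.star_apply,
    Finset.sum_mul, Finset.mul_sum]
  rw [Finset.sum_comm]
  exact Finset.sum_congr rfl fun i _ => Finset.sum_congr rfl fun j _ => by ring

lemma hel_cs {n : ℕ} {P : Matrix (Fin n) (Fin n) ℂ} (hP : P.PosSemidef) (x y : Fin n → ℂ) :
    ‖star x ⬝ᵥ (P *ᵥ y)‖ ^ 2 ≤ (star x ⬝ᵥ (P *ᵥ x)).re * (star y ⬝ᵥ (P *ᵥ y)).re := by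
  open MatrixOrder Matrix.Norms.L2Operator in obtain ⟨B, rfl⟩ := CStarAlgebra.nonneg_iff_eq_star_mul_self.mp hP.nonneg
  rw [Matrix.star_eq_conjTranspose]
  have key : ∀ u v : Fin n → ℂ, star u ⬝ᵥ ((Bᴴ * B) *ᵥ v)
      = (inner ℂ ((WithLp.equiv 2 (Fin n → ℂ)).symm (B *ᵥ u))
          ((WithLp.equiv 2 (Fin n → ℂ)).symm (B *ᵥ v)) : ℂ) := by
    intro u v
    rw [hel_inner_eq_dot', ← Matrix.mulVec_mulVec, dotProduct_mulVec, Matrix.star_mulVec]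
  rw [key, key, key]
  set X := (WithLp.equiv 2 (Fin n → ℂ)).symm (B *ᵥ x)
  set Y := (WithLp.equiv 2 (Fin n → ℂ)).symm (B *ᵥ y)
  have h1 : (inner ℂ X X : ℂ).re = ‖X‖ ^ 2 := by
    rw [inner_self_eq_norm_sq_to_K (𝕜 := ℂ)]; norm_cast
  have h2 : (inner ℂ Y Y : ℂ).re = ‖Y‖ ^ 2 := by
    rw [inner_self_eq_norm_sq_to_K (𝕜 := ℂ)]; norm_cast
  rw [h1, h2]
  calc ‖(inner ℂ X Y : ℂ)‖ ^ 2 ≤ (‖X‖ * ‖Y‖) ^ 2 := by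
        have := norm_inner_le_norm (𝕜 := ℂ) X Y
        nlinarith [norm_nonneg (inner ℂ X Y : ℂ)]
    _ = ‖X‖ ^ 2 * ‖Y‖ ^ 2 := by ring

lemma hel_alg {a b c : ℝ} (ha0 : 0 ≤ a) (ha1 : a ≤ 1) (hb0 : 0 ≤ b) (hb1 : b ≤ 1)
    (hc0 : 0 ≤ c) (hc : c ≤ Real.sqrt (a*b) + Real.sqrt ((1-a)*(1-b))) :
    a - b ≤ Real.sqrt (1 - c^2) := by
  set u := Real.sqrt (a*b) with hu'
  set v := Real.sqrt ((1-a)*(1-b)) with hv'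
  set p := Real.sqrt (a*(1-a)) with hp'
  set q := Real.sqrt (b*(1-b)) with hq'
  have hu : u^2 = a*b := Real.sq_sqrt (by positivity)
  have hv : v^2 = (1-a)*(1-b) := Real.sq_sqrt (by nlinarith)
  have hp : p^2 = a*(1-a) := Real.sq_sqrt (by nlinarith)
  have hq : q^2 = b*(1-b) := Real.sq_sqrt (by nlinarith)
  have huv : u*v = p*q := by
    rw [hu', hv', hp', hq', ← Real.sqrt_mul (by positivity), ← Real.sqrt_mul (by nlinarith)]
    ring_nf
  have hun : 0 ≤ u := Real.sqrt_nonneg _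
  have hvn : 0 ≤ v := Real.sqrt_nonneg _
  have hcc : c * c ≤ (u+v)*(u+v) := mul_le_mul hc hc hc0 (by linarith)
  have key : (a-b)^2 ≤ 1 - c^2 := by nlinarith [sq_nonneg (p-q)]
  calc a - b ≤ |a-b| := le_abs_self _
    _ = Real.sqrt ((a-b)^2) := (Real.sqrt_sq_eq_abs _).symm
    _ ≤ Real.sqrt (1 - c^2) := Real.sqrt_le_sqrt key

theorem helstrom_bound_pure {n : ℕ} (φ₀ φ₁ : EuclideanSpace ℂ (Fin n))
    (hφ₀ : ‖φ₀‖ = 1) (hφ₁ : ‖φ₁‖ = 1)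
    (ρ₀ ρ₁ : Matrix (Fin n) (Fin n) ℂ)
    (hρ₀ : ρ₀ = Matrix.vecMulVec (fun i => φ₀ i) (fun j => star (φ₀ j)))
    (hρ₁ : ρ₁ = Matrix.vecMulVec (fun i => φ₁ i) (fun j => star (φ₁ j))) :
    (∀ P₀ : Matrix (Fin n) (Fin n) ℂ, P₀.PosSemidef → (1 - P₀).PosSemidef →
      (1 / 2) * (1 - Real.sqrt (1 - ‖(inner ℂ φ₀ φ₁ : ℂ)‖ ^ 2)) ≤
        (1 / 2) * ((1 - P₀) * ρ₀).trace.re + (1 / 2) * (P₀ * ρ₁).trace.re) ∧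
    (∃ P₀ : Matrix (Fin n) (Fin n) ℂ, P₀.PosSemidef ∧ (1 - P₀).PosSemidef ∧
      (1 / 2) * ((1 - P₀) * ρ₀).trace.re + (1 / 2) * (P₀ * ρ₁).trace.re =
        (1 / 2) * (1 - Real.sqrt (1 - ‖(inner ℂ φ₀ φ₁ : ℂ)‖ ^ 2))) := by
  set f₀ : Fin n → ℂ := fun i => φ₀ i with hf₀
  set f₁ : Fin n → ℂ := fun i => φ₁ i with hf₁
  set c : ℂ := inner ℂ φ₀ φ₁ with hc
  have hd01 : star f₀ ⬝ᵥ f₁ = c := (hel_inner_eq_dot φ₀ φ₁).symm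
  have hd10 : star f₁ ⬝ᵥ f₀ = starRingEnd ℂ c := by
    rw [← hel_inner_eq_dot φ₁ φ₀, hc, ← inner_conj_symm]
  have hd00 : star f₀ ⬝ᵥ f₀ = 1 := by
    rw [← hel_inner_eq_dot φ₀ φ₀, inner_self_eq_norm_sq_to_K, hφ₀]; norm_num
  have hd11 : star f₁ ⬝ᵥ f₁ = 1 := by
    rw [← hel_inner_eq_dot φ₁ φ₁, inner_self_eq_norm_sq_to_K, hφ₁]; norm_num
  have hcle : ‖c‖ ≤ 1 := by
    have := norm_inner_le_norm (𝕜 := ℂ) φ₀ φ₁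
    rw [hφ₀, hφ₁] at this; simpa [hc] using this
  set s : ℝ := Real.sqrt (1 - ‖c‖^2) with hs'
  have hs0 : 0 ≤ s := Real.sqrt_nonneg _
  have hs2 : s^2 = 1 - ‖c‖^2 := Real.sq_sqrt (by nlinarith [norm_nonneg c])
  constructor
  · intro P hP hP'
    set a : ℝ := (star f₀ ⬝ᵥ (P *ᵥ f₀)).re with ha
    set b : ℝ := (star f₁ ⬝ᵥ (P *ᵥ f₁)).re with hb
    have ha0 : 0 ≤ a := by
      have := hP.dotProduct_mulVec_nonneg f₀; rw [Complex.le_def] at this; simpa [ha] using this.1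
    have hb0 : 0 ≤ b := by
      have := hP.dotProduct_mulVec_nonneg f₁; rw [Complex.le_def] at this; simpa [hb] using this.1
    have hsub : ∀ v : Fin n → ℂ, star v ⬝ᵥ ((1 - P) *ᵥ v)
        = star v ⬝ᵥ v - star v ⬝ᵥ (P *ᵥ v) := by
      intro v; rw [Matrix.sub_mulVec, Matrix.one_mulVec, dotProduct_sub]
    have ha1 : a ≤ 1 := by
      have := hP'.dotProduct_mulVec_nonneg f₀
      rw [Complex.le_def, hsub f₀, hd00] at this
      have h1 := this.1; simp at h1; linarith
    have hb1 : b ≤ 1 := by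
      have := hP'.dotProduct_mulVec_nonneg f₁
      rw [Complex.le_def, hsub f₁, hd11] at this
      have h1 := this.1; simp at h1; linarith
    have hre0 : (star f₀ ⬝ᵥ ((1 - P) *ᵥ f₀)).re = 1 - a := by
      rw [hsub f₀, hd00]; simp [ha]
    have hre1 : (star f₁ ⬝ᵥ ((1 - P) *ᵥ f₁)).re = 1 - b := by
      rw [hsub f₁, hd11]; simp [hb]
    have hsplit : star f₀ ⬝ᵥ (P *ᵥ f₁) + star f₀ ⬝ᵥ ((1 - P) *ᵥ f₁) = c := by
      rw [Matrix.sub_mulVec, Matrix.one_mulVec, dotProduct_sub, ← hd01]; ring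
    have ht1 : ‖star f₀ ⬝ᵥ (P *ᵥ f₁)‖ ≤ Real.sqrt (a * b) :=
      Real.le_sqrt_of_sq_le (hel_cs hP f₀ f₁)
    have ht2 : ‖star f₀ ⬝ᵥ ((1 - P) *ᵥ f₁)‖ ≤ Real.sqrt ((1-a) * (1-b)) := by
      refine Real.le_sqrt_of_sq_le ?_
      calc ‖star f₀ ⬝ᵥ ((1 - P) *ᵥ f₁)‖ ^ 2
          ≤ (star f₀ ⬝ᵥ ((1-P) *ᵥ f₀)).re * (star f₁ ⬝ᵥ ((1-P) *ᵥ f₁)).re := hel_cs hP' f₀ f₁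
        _ = (1-a)*(1-b) := by rw [hre0, hre1]
    have hnorm : ‖c‖ ≤ Real.sqrt (a*b) + Real.sqrt ((1-a)*(1-b)) := by
      calc ‖c‖ = ‖star f₀ ⬝ᵥ (P *ᵥ f₁) + star f₀ ⬝ᵥ ((1 - P) *ᵥ f₁)‖ := by rw [hsplit]
        _ ≤ ‖star f₀ ⬝ᵥ (P *ᵥ f₁)‖ + ‖star f₀ ⬝ᵥ ((1 - P) *ᵥ f₁)‖ := norm_add_le _ _
        _ ≤ _ := add_le_add ht1 ht2
    have key := hel_alg ha0 ha1 hb0 hb1 (norm_nonneg c) hnorm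
    rw [hρ₀, hρ₁, hel_trace_eq, hel_trace_eq, hre0]
    rw [← hb]
    linarith
  · by_cases hz : s = 0
    · -- take P₀ = 0
      refine ⟨0, Matrix.PosSemidef.zero, by simpa using (Matrix.PosSemidef.one (n := Fin n) (R := ℂ)), ?_⟩
      rw [hρ₀, hρ₁, hel_trace_eq, hel_trace_eq]
      rw [sub_zero, Matrix.one_mulVec, Matrix.zero_mulVec, dotProduct_zero, hd00]
      simp [hz]
    · have hspos : 0 < s := lt_of_le_of_ne hs0 (Ne.symm hz)
      set N : ℝ := Real.sqrt (2*s^2*(1+s)) with hN'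
      have hN2 : N^2 = 2*s^2*(1+s) := Real.sq_sqrt (by positivity)
      have hNpos : 0 < N := Real.sqrt_pos.mpr (by positivity)
      set w : Fin n → ℂ := ((1+s : ℝ) : ℂ) • f₀ - (starRingEnd ℂ c) • f₁ with hw'
      set u : Fin n → ℂ := (((N⁻¹ : ℝ)) : ℂ) • w with hu'
      have hstarw : star w = ((1+s : ℝ) : ℂ) • star f₀ - c • star f₁ := by
        funext i
        simp [hw', star_sub, star_mul', Complex.conj_ofReal]
      have hstaru : star u = (((N⁻¹ : ℝ)) : ℂ) • star w := by
        funext i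
        simp [hu', star_mul', Complex.conj_ofReal]
      have hcc : (starRingEnd ℂ c) * c = ((‖c‖^2 : ℝ) : ℂ) := hel_conj_mul_self c
      have hnormc : (‖c‖^2 : ℝ) = 1 - s^2 := by linarith
      have hcc' : c * (starRingEnd ℂ c) = ((‖c‖^2 : ℝ) : ℂ) := by rw [mul_comm]; exact hcc
      -- dot products with w
      have hdwf₀ : star w ⬝ᵥ f₀ = ((s + s^2 : ℝ) : ℂ) := by
        rw [hstarw, sub_dotProduct, smul_dotProduct, smul_dotProduct,
          hd00, hd10, smul_eq_mul, smul_eq_mul, mul_one, hcc',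
          show ((‖c‖^2 : ℝ) : ℂ) = ((1 - s^2 : ℝ) : ℂ) by rw [hnormc]]
        push_cast; ring
      have hdwf₁ : star w ⬝ᵥ f₁ = ((s : ℝ) : ℂ) * c := by
        rw [hstarw, sub_dotProduct, smul_dotProduct, smul_dotProduct,
          hd01, hd11, smul_eq_mul, smul_eq_mul, mul_one]
        push_cast; ring
      have hdww : star w ⬝ᵥ w = ((2*s^2*(1+s) : ℝ) : ℂ) := by
        rw [hw', dotProduct_sub, dotProduct_smul, dotProduct_smul,
          hdwf₀, hdwf₁, smul_eq_mul, smul_eq_mul]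
        rw [show (starRingEnd ℂ) c * (((s:ℝ):ℂ) * c) = ((s:ℝ):ℂ) * ((starRingEnd ℂ) c * c) by ring, hcc,
          show ((‖c‖^2 : ℝ) : ℂ) = ((1 - s^2 : ℝ) : ℂ) by rw [hnormc]]
        push_cast; ring
      -- dot products with u
      have hduf₀ : star u ⬝ᵥ f₀ = (((s + s^2)/N : ℝ) : ℂ) := by
        rw [hstaru, smul_dotProduct, hdwf₀, smul_eq_mul]
        push_cast; ring
      have hduf₁ : star u ⬝ᵥ f₁ = ((s/N : ℝ) : ℂ) * c := by
        rw [hstaru, smul_dotProduct, hdwf₁, smul_eq_mul]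
        push_cast; ring
      have hNne : N ≠ 0 := ne_of_gt hNpos
      have hduu : star u ⬝ᵥ u = 1 := by
        rw [hstaru, smul_dotProduct, hu', dotProduct_smul, hdww,
          smul_eq_mul, smul_eq_mul,
          show ((2*s^2*(1+s) : ℝ) : ℂ) = ((N:ℝ):ℂ)^2 by rw [← Complex.ofReal_pow, hN2]]
        have hNc : ((N:ℝ):ℂ) ≠ 0 := by exact_mod_cast hNne
        field_simp
        push_cast; field_simp
      set P : Matrix (Fin n) (Fin n) ℂ := Matrix.vecMulVec u (star u) with hP'
      have hvmv : ∀ x y : Fin n → ℂ, star x ⬝ᵥ (P *ᵥ y) = (star x ⬝ᵥ u) * (star u ⬝ᵥ y) :=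
        fun x y => hel_dot_vecMulVec u x y
      have hherm : P.IsHermitian := by
        ext i j
        simp only [hP', Matrix.conjTranspose_apply, Matrix.vecMulVec_apply, Pi.star_apply,
          star_mul', star_star]
        ring
      have hPpsd : P.PosSemidef := by
        refine Matrix.PosSemidef.of_dotProduct_mulVec_nonneg hherm fun x => ?_
        rw [hvmv, hel_dot_conj x u, hel_conj_mul_self]
        exact_mod_cast Complex.zero_le_real.mpr (sq_nonneg _)
      have hstt : ∀ t : ℂ, (star t) * t = ((‖t‖^2 : ℝ) : ℂ) := fun t => hel_conj_mul_self t
      have h1Ppsd : (1 - P).PosSemidef := by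
        refine Matrix.PosSemidef.of_dotProduct_mulVec_nonneg (Matrix.IsHermitian.sub Matrix.isHermitian_one hherm) fun x => ?_
        rw [Matrix.sub_mulVec, Matrix.one_mulVec, dotProduct_sub, hvmv,
          hel_dot_conj x u, hel_conj_mul_self]
        have hxx := dotProduct_star_self_nonneg x
        rw [Complex.le_def] at hxx ⊢
        constructor
        · have hcs := hel_cs (Matrix.PosSemidef.one (n := Fin n) (R := ℂ)) u x
          simp only [Matrix.one_mulVec] at hcs
          rw [hduu] at hcs
          simp only [Complex.sub_re, Complex.zero_re, Complex.one_re] at hcs ⊢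
          simp only [Complex.ofReal_re]
          nlinarith [hcs]
        · have him : (star x ⬝ᵥ x).im = 0 := by simpa using hxx.2.symm
          simp [Complex.sub_im, Complex.ofReal_im, him, Complex.zero_im, ← Complex.ofReal_pow]
      refine ⟨P, hPpsd, h1Ppsd, ?_⟩
      rw [hρ₀, hρ₁, hel_trace_eq, hel_trace_eq]
      have e0 : star f₀ ⬝ᵥ ((1 - P) *ᵥ f₀) = 1 - ((((s + s^2)/N : ℝ))^2 : ℝ) := by
        rw [Matrix.sub_mulVec, Matrix.one_mulVec, dotProduct_sub, hd00, hvmv,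
          hel_dot_conj f₀ u, hduf₀, Complex.conj_ofReal]
        push_cast; ring
      have e1 : star f₁ ⬝ᵥ (P *ᵥ f₁) = (((s/N : ℝ))^2 * ‖c‖^2 : ℝ) := by
        rw [hvmv, hel_dot_conj f₁ u, hduf₁, _root_.map_mul, Complex.conj_ofReal]
        have : ((s/N : ℝ) : ℂ) * (starRingEnd ℂ c) * (((s/N : ℝ) : ℂ) * c)
            = ((s/N : ℝ) : ℂ)^2 * ((starRingEnd ℂ c) * c) := by ring
        rw [this, hcc]
        push_cast; ring
      rw [e0, e1]
      have hN2' : N^2 = 2*s^2*(1+s) := hN2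
      have hval0 : ((s + s^2)/N)^2 = (1+s)/2 := by
        rw [div_pow, hN2]
        field_simp
      have hval1 : (s/N)^2 * ‖c‖^2 = (1-s)/2 := by
        rw [div_pow, hN2, hnormc]
        field_simp
        ring
      rw [show ((1:ℂ) - ((((s + s^2)/N : ℝ))^2 : ℝ)).re = 1 - ((s+s^2)/N)^2 by
        rw [Complex.sub_re, Complex.one_re, Complex.ofReal_re]]
      rw [Complex.ofReal_re, hval0, hval1]
      ring
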